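/- Fix an integer k ≥ 3. There exists a constant C > 0 such that for every N ≥ 2 there is a finite set S of functions [N] → ℝ with: (i) |v(a)| ≤ C for every v ∈ S and a ∈ [N]; (ii) |S| ≤ exp(C·N^{1−1/(k−1)}); and (iii) for every f : [N] → {0,1}, the normalized gradient (1/N)·∇T_k(f) lies in the convex hull of S. -/

import Mathlib

noncomputable section

/-- Gradient of the k-AP counting function at f : ℤ → ℝ (f vanishing outside [1,N]):
∇T_k(f)(a) = Σ_b Σ_{i<k} Π_{j<k, j≠i} f(a+(j−i)b). -/
def gradTkInt (k N : ℕ) (f : ℤ → ℝ) (a : ℤ) : ℝ :=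
  ∑ b ∈ Finset.Icc (-(N : ℤ)) (N : ℤ), ∑ i ∈ Finset.range k,
    ∏ j ∈ (Finset.range k).erase i, f (a + ((j : ℤ) - (i : ℤ)) * b)

namespace GHS

open Finset

attribute [local instance] Classical.propDecidable

/-- The basic scale parameter `q ≈ N^(1/(k-1))`. -/
def qq (k N : ℕ) : ℕ := max (k + 1) ⌈(N : ℝ) ^ ((1 : ℝ) / ((k : ℝ) - 1))⌉₊

lemma qq_pos (k N : ℕ) : 0 < qq k N :=
  lt_of_lt_of_le k.succ_pos (le_max_left _ _)

/-- A prime in `(2^j * q, 2^(j+1) * q]`, via Bertrand's postulate. -/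
def mm (k N j : ℕ) : ℕ :=
  (Nat.exists_prime_lt_and_le_two_mul (2 ^ j * qq k N)
    (Nat.mul_ne_zero (pow_ne_zero j two_ne_zero) (qq_pos k N).ne')).choose

lemma mm_spec (k N j : ℕ) :
    Nat.Prime (mm k N j) ∧ 2 ^ j * qq k N < mm k N j ∧ mm k N j ≤ 2 * (2 ^ j * qq k N) :=
  (Nat.exists_prime_lt_and_le_two_mul (2 ^ j * qq k N)
    (Nat.mul_ne_zero (pow_ne_zero j two_ne_zero) (qq_pos k N).ne')).choose_spec

lemma mm_prime (k N j : ℕ) : Nat.Prime (mm k N j) := (mm_spec k N j).1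

lemma qq_lt_mm (k N j : ℕ) : qq k N < mm k N j := by
  have h1 : qq k N ≤ 2 ^ j * qq k N :=
    Nat.le_mul_of_pos_left _ (pow_pos (by norm_num) j)
  exact lt_of_le_of_lt h1 (mm_spec k N j).2.1

lemma mm_ub (k N j : ℕ) : mm k N j ≤ 2 ^ (j + 1) * qq k N := by
  have := (mm_spec k N j).2.2
  calc mm k N j ≤ 2 * (2 ^ j * qq k N) := this
    _ = 2 ^ (j + 1) * qq k N := by ring

lemma mm_mono (k N : ℕ) {j j' : ℕ} (h : j < j') : mm k N j < mm k N j' := by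
  calc mm k N j ≤ 2 ^ (j + 1) * qq k N := mm_ub k N j
    _ ≤ 2 ^ j' * qq k N := by
        have : 2 ^ (j + 1) ≤ 2 ^ j' := Nat.pow_le_pow_right (by norm_num) h
        exact Nat.mul_le_mul_right _ this
    _ < mm k N j' := (mm_spec k N j').2.1

/-- The per-cell weight-count function. -/
def U (k N i : ℕ) (γ : ∀ j ∈ (Finset.range k).erase i, ℤ) (g : ℤ → ℝ) (a : ℤ) : ℝ :=
  ∑ b ∈ Finset.Icc (-(N : ℤ)) (N : ℤ), ∏ x ∈ ((Finset.range k).erase i).attach,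
    ((if ((mm k N x.1 : ℤ) ∣ (a + ((x.1 : ℤ) - (i : ℤ)) * b - γ x.1 x.2)) then (1 : ℝ) else 0)
      * g (a + ((x.1 : ℤ) - (i : ℤ)) * b))

/-- The cells indexing the convex decomposition. -/
def cells (k N : ℕ) : Finset (Σ i : ℕ, ∀ j ∈ (Finset.range k).erase i, ℤ) :=
  (Finset.range k).sigma
    (fun i => ((Finset.range k).erase i).pi (fun j => Finset.Ico (0 : ℤ) (mm k N j)))

/-- The trace set of a cell. -/
def Tr (k N : ℕ) (i : ℕ) (γ : ∀ j ∈ (Finset.range k).erase i, ℤ) : Finset ℤ :=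
  (Finset.Icc (1 : ℤ) (N : ℤ)).filter
    (fun x => ∃ j, ∃ h : j ∈ (Finset.range k).erase i, ((mm k N j : ℤ) ∣ (x - γ j h)))

def Lam (k : ℕ) : ℕ := k * (2 ^ k * (2 * (k + 1))) ^ k

/-- Catalog vectors. -/
def cat (k N : ℕ) (c : Σ i : ℕ, ∀ j ∈ (Finset.range k).erase i, ℤ) (A : Finset ℤ) :
    (Finset.Icc (1 : ℤ) (N : ℤ)) → ℝ :=
  fun a => (Lam k : ℝ) * U k N c.1 c.2 (fun x => if x ∈ A then (1 : ℝ) else 0) (a : ℤ)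

/-- The catalog. -/
def SS (k N : ℕ) : Finset ((Finset.Icc (1 : ℤ) (N : ℤ)) → ℝ) :=
  insert (fun _ => 0)
    (((cells k N).sigma (fun c => (Tr k N c.1 c.2).powerset)).image (fun p => cat k N p.1 p.2))

/-- Exactly one residue in `[0,m)` matches `p` mod `m`. -/
lemma sum_indicator_Ico (m : ℕ) (hm : 0 < m) (p : ℤ) :
    ∑ v ∈ Finset.Ico (0 : ℤ) (m : ℤ), (if (m : ℤ) ∣ (p - v) then (1 : ℝ) else 0) = 1 := by
  have hmz : (0 : ℤ) < (m : ℤ) := by exact_mod_cast hm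
  have hmem : p % (m : ℤ) ∈ Finset.Ico (0 : ℤ) (m : ℤ) := by
    rw [Finset.mem_Ico]
    exact ⟨Int.emod_nonneg p hmz.ne', Int.emod_lt_of_pos p hmz⟩
  rw [Finset.sum_eq_single_of_mem (p % (m : ℤ)) hmem ?_]
  · rw [if_pos]
    exact ⟨p / (m : ℤ), by have := Int.emod_add_mul_ediv p (m : ℤ); linarith⟩
  · intro v hv hne
    rw [if_neg]
    intro hdvd
    apply hne
    rw [Finset.mem_Ico] at hv
    have h1 : p % (m : ℤ) = v % (m : ℤ) := Int.ModEq.symm (Int.modEq_iff_dvd.mpr hdvd)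
    rw [h1, Int.emod_eq_of_lt hv.1 hv.2]

/-- Summing the cell counts over all residue vectors recovers the full `b`-sum. -/
lemma partition (k N i : ℕ) (g : ℤ → ℝ) (a : ℤ) :
    ∑ γ ∈ ((Finset.range k).erase i).pi (fun j => Finset.Ico (0 : ℤ) (mm k N j)),
      U k N i γ g a
    = ∑ b ∈ Finset.Icc (-(N : ℤ)) (N : ℤ),
        ∏ j ∈ (Finset.range k).erase i, g (a + ((j : ℤ) - (i : ℤ)) * b) := by
  unfold U
  rw [Finset.sum_comm]
  refine Finset.sum_congr rfl (fun b _ => ?_)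
  rw [← Finset.prod_sum ((Finset.range k).erase i) (fun j => Finset.Ico (0 : ℤ) (mm k N j))
    (fun j v => (if ((mm k N j : ℤ) ∣ (a + ((j : ℤ) - (i : ℤ)) * b - v)) then (1 : ℝ) else 0)
      * g (a + ((j : ℤ) - (i : ℤ)) * b))]
  refine Finset.prod_congr rfl (fun j hj => ?_)
  rw [← Finset.sum_mul, sum_indicator_Ico _ (mm_prime k N j).pos, one_mul]

/-- The sum of cell counts over all cells is the gradient. -/
lemma grad_sum (k N : ℕ) (g : ℤ → ℝ) (a : ℤ) :
    ∑ c ∈ cells k N, U k N c.1 c.2 g a = gradTkInt k N g a := by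
  unfold cells gradTkInt
  rw [Finset.sum_sigma]
  rw [Finset.sum_comm]
  refine Finset.sum_congr rfl (fun i _ => ?_)
  exact partition k N i g a

lemma qq_rpow_le (k N : ℕ) : (N : ℝ) ^ ((1 : ℝ) / ((k : ℝ) - 1)) ≤ (qq k N : ℝ) := by
  refine le_trans (Nat.le_ceil _) ?_
  have : ⌈(N : ℝ) ^ ((1 : ℝ) / ((k : ℝ) - 1))⌉₊ ≤ qq k N := le_max_right _ _
  exact_mod_cast this

lemma rpow_root_pow (k N : ℕ) (hk : 3 ≤ k) :
    ((N : ℝ) ^ ((1 : ℝ) / ((k : ℝ) - 1))) ^ (k - 1) = (N : ℝ) := by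
  have hk1 : (1 : ℝ) ≤ (k : ℝ) := by exact_mod_cast le_trans (by norm_num) hk
  have hkc : ((k - 1 : ℕ) : ℝ) = (k : ℝ) - 1 := by
    have : 1 ≤ k := le_trans (by norm_num) hk
    push_cast [Nat.cast_sub this]
    ring
  have hne : (k : ℝ) - 1 ≠ 0 := by
    have : (3 : ℝ) ≤ (k : ℝ) := by exact_mod_cast hk
    linarith
  rw [← Real.rpow_natCast ((N : ℝ) ^ ((1 : ℝ) / ((k : ℝ) - 1))) (k - 1),
    ← Real.rpow_mul (Nat.cast_nonneg N), hkc]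
  rw [one_div, inv_mul_cancel₀ hne, Real.rpow_one]

lemma N_le_qq_pow (k N : ℕ) (hk : 3 ≤ k) : N ≤ qq k N ^ (k - 1) := by
  have h1 : (N : ℝ) ≤ ((qq k N : ℝ)) ^ (k - 1) := by
    calc (N : ℝ) = ((N : ℝ) ^ ((1 : ℝ) / ((k : ℝ) - 1))) ^ (k - 1) := (rpow_root_pow k N hk).symm
      _ ≤ ((qq k N : ℝ)) ^ (k - 1) := by
          refine pow_le_pow_left₀ ?_ (qq_rpow_le k N) _
          positivity
  exact_mod_cast h1

/-- Number of `b`'s satisfying all cell congruences is at most 3 (CRT). -/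
lemma crt_card (k N i : ℕ) (hk : 3 ≤ k) (hi : i ∈ Finset.range k)
    (γ : ∀ j ∈ (Finset.range k).erase i, ℤ) (a : ℤ) :
    ((Finset.Icc (-(N : ℤ)) (N : ℤ)).filter
      (fun b => ∀ j, ∀ h : j ∈ (Finset.range k).erase i,
        ((mm k N j : ℤ) ∣ (a + ((j : ℤ) - (i : ℤ)) * b - γ j h)))).card ≤ 3 := by
  set M : ℤ := ∏ j ∈ (Finset.range k).erase i, (mm k N j : ℤ) with hM
  have hMN : (N : ℤ) ≤ M := by
    have h1 : (qq k N : ℤ) ^ (k - 1) ≤ M := by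
      rw [hM]
      calc (qq k N : ℤ) ^ (k - 1)
          = ∏ _j ∈ (Finset.range k).erase i, (qq k N : ℤ) := by
            rw [Finset.prod_const, Finset.card_erase_of_mem hi, Finset.card_range]
        _ ≤ ∏ j ∈ (Finset.range k).erase i, (mm k N j : ℤ) := by
            refine Finset.prod_le_prod (fun j _ => by positivity) (fun j _ => ?_)
            exact_mod_cast (qq_lt_mm k N j).le
    refine le_trans ?_ h1
    exact_mod_cast N_le_qq_pow k N hk
  have hMpos : (0 : ℤ) < M := by
    rw [hM]
    exact Finset.prod_pos (fun j _ => by exact_mod_cast (mm_prime k N j).pos)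
  -- all solutions agree modulo M
  have hdiff : ∀ b ∈ (Finset.Icc (-(N : ℤ)) (N : ℤ)).filter
      (fun b => ∀ j, ∀ h : j ∈ (Finset.range k).erase i,
        ((mm k N j : ℤ) ∣ (a + ((j : ℤ) - (i : ℤ)) * b - γ j h))),
      ∀ b' ∈ (Finset.Icc (-(N : ℤ)) (N : ℤ)).filter
      (fun b => ∀ j, ∀ h : j ∈ (Finset.range k).erase i,
        ((mm k N j : ℤ) ∣ (a + ((j : ℤ) - (i : ℤ)) * b - γ j h))),
      M ∣ (b - b') := by
    intro b hb b' hb'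
    rw [Finset.mem_filter] at hb hb'
    rw [hM]
    refine Finset.prod_dvd_of_coprime ?_ ?_
    · intro j hj j' hj' hne
      have h1 : Nat.Coprime (mm k N j) (mm k N j') :=
        (Nat.coprime_primes (mm_prime k N j) (mm_prime k N j')).mpr
          (fun h => hne (by
            rcases lt_trichotomy j j' with h'|h'|h'
            · exact absurd h (Nat.ne_of_lt (mm_mono k N h'))
            · exact h'
            · exact absurd h (Nat.ne_of_gt (mm_mono k N h'))))
      exact Int.isCoprime_iff_gcd_eq_one.mpr (by exact_mod_cast h1)
    · intro j hj
      have hd1 := hb.2 j hj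
      have hd2 := hb'.2 j hj
      have hd : (mm k N j : ℤ) ∣ ((j : ℤ) - (i : ℤ)) * (b - b') := by
        have : ((j : ℤ) - (i : ℤ)) * (b - b')
            = (a + ((j : ℤ) - (i : ℤ)) * b - γ j hj) - (a + ((j : ℤ) - (i : ℤ)) * b' - γ j hj) := by
          ring
        rw [this]
        exact dvd_sub hd1 hd2
      have hp : Prime ((mm k N j : ℤ)) := Int.prime_iff_natAbs_prime.mpr (by
        simpa using (mm_prime k N j))
      rcases hp.dvd_mul.mp hd with h | h
      · exfalso
        have hji : j ≠ i := (Finset.mem_erase.mp hj).1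
        have hjk : j < k := Finset.mem_range.mp (Finset.mem_erase.mp hj).2
        have hik : i < k := Finset.mem_range.mp hi
        have habs : mm k N j ∣ ((j : ℤ) - (i : ℤ)).natAbs := Int.natCast_dvd.mp h
        have hne0 : ((j : ℤ) - (i : ℤ)).natAbs ≠ 0 := by
          intro h0
          exact hji (by omega)
        have hlt : ((j : ℤ) - (i : ℤ)).natAbs < mm k N j := by
          have h2 : ((j : ℤ) - (i : ℤ)).natAbs < k + 1 := by omega
          exact lt_of_lt_of_le h2 (le_trans (le_max_left _ _) (qq_lt_mm k N j).le)
        exact absurd (Nat.le_of_dvd (Nat.pos_of_ne_zero hne0) habs) (not_le.mpr hlt)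
      · exact h
  -- injection into a 3-element set
  have h3 : ((3:ℕ)) = (Finset.Icc (0 : ℤ) 2).card := by
    rw [Int.card_Icc]; rfl
  rw [h3]
  refine Finset.card_le_card_of_injOn (fun b => (b + N) / M) ?_ ?_
  · intro b hb
    rw [Finset.mem_coe, Finset.mem_filter, Finset.mem_Icc] at hb
    rw [Finset.mem_coe, Finset.mem_Icc]
    constructor
    · exact Int.ediv_nonneg (by linarith [hb.1.1]) hMpos.le
    · have h2 : b + N ≤ 2 * M := by linarith [hb.1.2]
      calc (b + N) / M ≤ (2 * M) / M := Int.ediv_le_ediv hMpos h2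
        _ = 2 := Int.mul_ediv_cancel _ hMpos.ne'
  · intro b hb b' hb' heq
    have hdvd := hdiff b hb b' hb'
    have hmod : (b + (N : ℤ)) % M = (b' + N) % M := by
      have h' : (b + (N : ℤ)) ≡ (b' + N) [ZMOD M] := Int.modEq_iff_dvd.mpr (by
        rw [show (b' + (N : ℤ)) - (b + N) = -(b - b') by ring]
        exact dvd_neg.mpr hdvd)
      exact h'
    have heq' : (b + (N : ℤ)) / M = (b' + N) / M := heq
    have hfin : b + (N : ℤ) = b' + N := by
      conv_lhs => rw [← Int.mul_ediv_add_emod (b + N) M]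
      conv_rhs => rw [← Int.mul_ediv_add_emod (b' + N) M]
      rw [heq', hmod]
    linarith

lemma U_nonneg (k N i : ℕ) (γ : ∀ j ∈ (Finset.range k).erase i, ℤ) (g : ℤ → ℝ)
    (hg : ∀ x, 0 ≤ g x) (a : ℤ) : 0 ≤ U k N i γ g a := by
  refine Finset.sum_nonneg (fun b _ => Finset.prod_nonneg (fun x _ => ?_))
  refine mul_nonneg ?_ (hg _)
  split_ifs <;> norm_num

lemma U_le_three (k N i : ℕ) (hk : 3 ≤ k) (hi : i ∈ Finset.range k)
    (γ : ∀ j ∈ (Finset.range k).erase i, ℤ) (g : ℤ → ℝ)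
    (hg0 : ∀ x, 0 ≤ g x) (hg1 : ∀ x, g x ≤ 1) (a : ℤ) :
    U k N i γ g a ≤ 3 := by
  have hstep : U k N i γ g a ≤
      ∑ b ∈ Finset.Icc (-(N : ℤ)) (N : ℤ),
        (if (∀ j, ∀ h : j ∈ (Finset.range k).erase i,
          ((mm k N j : ℤ) ∣ (a + ((j : ℤ) - (i : ℤ)) * b - γ j h))) then (1 : ℝ) else 0) := by
    refine Finset.sum_le_sum (fun b _ => ?_)
    by_cases hc : ∀ j, ∀ h : j ∈ (Finset.range k).erase i,
        ((mm k N j : ℤ) ∣ (a + ((j : ℤ) - (i : ℤ)) * b - γ j h))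
    · rw [if_pos hc]
      refine Finset.prod_le_one (fun x _ => ?_) (fun x _ => ?_)
      · refine mul_nonneg ?_ (hg0 _)
        split_ifs <;> norm_num
      · refine mul_le_one₀ ?_ (hg0 _) (hg1 _)
        split_ifs <;> norm_num
    · rw [if_neg hc]
      push_neg at hc
      obtain ⟨j, h, hnd⟩ := hc
      refine le_of_eq (Finset.prod_eq_zero (Finset.mem_attach _ ⟨j, h⟩) ?_)
      rw [if_neg hnd, zero_mul]
  refine le_trans hstep ?_
  rw [Finset.sum_boole]
  exact_mod_cast crt_card k N i hk hi γ a

/-- The cell count only depends on `f` through its trace on the cell's classes. -/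
lemma traceEq (k N i : ℕ) (γ : ∀ j ∈ (Finset.range k).erase i, ℤ) (f : ℤ → ℝ)
    (hf01 : ∀ x, f x = 0 ∨ f x = 1)
    (hsupp : ∀ x, x ∉ Finset.Icc (1 : ℤ) (N : ℤ) → f x = 0) (a : ℤ) :
    U k N i γ f a
      = U k N i γ (fun x => if x ∈ (Tr k N i γ).filter (fun y => f y = 1) then (1 : ℝ) else 0)
          a := by
  unfold U
  refine Finset.sum_congr rfl (fun b _ => Finset.prod_congr rfl (fun x _ => ?_))
  by_cases hd : ((mm k N x.1 : ℤ) ∣ (a + ((x.1 : ℤ) - (i : ℤ)) * b - γ x.1 x.2))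
  · rw [if_pos hd, one_mul, one_mul]
    set p : ℤ := a + ((x.1 : ℤ) - (i : ℤ)) * b with hp
    show f p = if p ∈ (Tr k N i γ).filter (fun y => f y = 1) then (1 : ℝ) else 0
    rcases hf01 p with h0 | h1
    · rw [h0, eq_comm, if_neg]
      intro hmem
      rw [Finset.mem_filter] at hmem
      rw [h0] at hmem
      norm_num at hmem
    · rw [h1, eq_comm, if_pos]
      rw [Finset.mem_filter]
      refine ⟨?_, h1⟩
      unfold Tr
      rw [Finset.mem_filter]
      constructor
      · by_contra hcon
        rw [hsupp p hcon] at h1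
        norm_num at h1
      · exact ⟨x.1, x.2, hd⟩
  · rw [if_neg hd, zero_mul, zero_mul]

/-- Counting an arithmetic progression class inside `[1,N]`. -/
lemma AP_card (N : ℕ) (hN : 1 ≤ N) (m : ℕ) (hm : 0 < m) (r : ℤ) :
    ((Finset.Icc (1 : ℤ) (N : ℤ)).filter (fun x => (m : ℤ) ∣ (x - r))).card ≤ N / m + 1 := by
  have hmz : (0 : ℤ) < (m : ℤ) := by exact_mod_cast hm
  have hinj : ∀ b ∈ (Finset.Icc (1 : ℤ) (N : ℤ)).filter (fun x => (m : ℤ) ∣ (x - r)),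
      (b - 1) / (m : ℤ) ∈ Finset.Icc (0 : ℤ) (((N : ℤ) - 1) / m) := by
    intro x hx
    rw [Finset.mem_filter, Finset.mem_Icc] at hx
    rw [Finset.mem_Icc]
    exact ⟨Int.ediv_nonneg (by linarith [hx.1.1]) hmz.le,
      Int.ediv_le_ediv hmz (by linarith [hx.1.2])⟩
  have hinj2 : Set.InjOn (fun x => (x - 1) / (m : ℤ))
      ((Finset.Icc (1 : ℤ) (N : ℤ)).filter (fun x => (m : ℤ) ∣ (x - r)) : Finset ℤ) := by
    intro x hx y hy hxy
    rw [Finset.coe_filter, Set.mem_setOf_eq] at hx hy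
    have hdd : (m : ℤ) ∣ (x - y) := by
      have h' : x - y = (x - r) - (y - r) := by ring
      rw [h']
      exact dvd_sub hx.2 hy.2
    have hxy' : (x - 1) / (m : ℤ) = (y - 1) / m := hxy
    have hmod : (x - 1) % (m : ℤ) = (y - 1) % m := by
      have h' : (x - 1 : ℤ) ≡ (y - 1) [ZMOD (m : ℤ)] := Int.modEq_iff_dvd.mpr (by
        rw [show (y - 1 : ℤ) - (x - 1) = -(x - y) by ring]
        exact dvd_neg.mpr hdd)
      exact h'
    have hfin : x - 1 = y - (1 : ℤ) := by
      conv_lhs => rw [← Int.mul_ediv_add_emod (x - 1) (m : ℤ)]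
      conv_rhs => rw [← Int.mul_ediv_add_emod (y - 1) (m : ℤ)]
      rw [hxy', hmod]
    linarith
  refine le_trans (Finset.card_le_card_of_injOn _ hinj hinj2) ?_
  rw [Int.card_Icc]
  have h1 : ((N : ℤ) - 1) / m = (((N - 1) / m : ℕ) : ℤ) := by
    have h2 : ((N : ℤ) - 1) = ((N - 1 : ℕ) : ℤ) := by
      push_cast [Nat.cast_sub hN]; ring
    rw [h2]
    exact_mod_cast (Int.natCast_ediv (N - 1) m).symm
  rw [h1, sub_zero]
  have h3 : ((((N - 1) / m : ℕ) : ℤ) + 1) = (((N - 1) / m + 1 : ℕ) : ℤ) := by push_cast; ring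
  rw [h3, Int.toNat_natCast]
  exact Nat.succ_le_succ (Nat.div_le_div_right (by omega))

/-- Size of the trace of a cell. -/
lemma Tr_card (k N i : ℕ) (hN : 1 ≤ N) (γ : ∀ j ∈ (Finset.range k).erase i, ℤ) :
    (Tr k N i γ).card ≤ k * (N / qq k N + 1) := by
  have hsub : Tr k N i γ ⊆ ((Finset.range k).erase i).attach.biUnion
      (fun x => (Finset.Icc (1 : ℤ) (N : ℤ)).filter (fun y => (mm k N x.1 : ℤ) ∣ (y - γ x.1 x.2))) := by
    intro y hy
    unfold Tr at hy
    rw [Finset.mem_filter] at hy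
    obtain ⟨hy1, j, hj, hd⟩ := hy
    rw [Finset.mem_biUnion]
    exact ⟨⟨j, hj⟩, Finset.mem_attach _ _, Finset.mem_filter.mpr ⟨hy1, hd⟩⟩
  refine le_trans (Finset.card_le_card hsub) ?_
  refine le_trans (Finset.card_biUnion_le) ?_
  have hbound : ∀ x : {j // j ∈ (Finset.range k).erase i},
      ((Finset.Icc (1 : ℤ) (N : ℤ)).filter (fun y => (mm k N x.1 : ℤ) ∣ (y - γ x.1 x.2))).card
        ≤ N / qq k N + 1 := by
    intro x
    refine le_trans (AP_card N hN (mm k N x.1) (mm_prime k N x.1).pos (γ x.1 x.2)) ?_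
    have : N / mm k N x.1 ≤ N / qq k N := Nat.div_le_div_left (qq_lt_mm k N x.1).le (qq_pos k N)
    omega
  refine le_trans (Finset.sum_le_sum (fun x _ => hbound x)) ?_
  rw [Finset.sum_const, smul_eq_mul]
  have hcard : (((Finset.range k).erase i).attach).card ≤ k := by
    rw [Finset.card_attach]
    exact le_trans (Finset.card_erase_le) (by rw [Finset.card_range])
  exact Nat.mul_le_mul_right _ hcard

lemma root_ge_one (k N : ℕ) (hk : 3 ≤ k) (hN : 1 ≤ N) :
    (1 : ℝ) ≤ (N : ℝ) ^ ((1 : ℝ) / ((k : ℝ) - 1)) := by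
  refine Real.one_le_rpow ?_ ?_
  · exact_mod_cast hN
  · have h3 : (3 : ℝ) ≤ (k : ℝ) := by exact_mod_cast hk
    have h4 : (0 : ℝ) < (k : ℝ) - 1 := by linarith
    positivity

lemma qq_le (k N : ℕ) (hk : 3 ≤ k) (hN : 1 ≤ N) :
    (qq k N : ℝ) ≤ 2 * (k + 1) * (N : ℝ) ^ ((1 : ℝ) / ((k : ℝ) - 1)) := by
  set x : ℝ := (N : ℝ) ^ ((1 : ℝ) / ((k : ℝ) - 1)) with hx
  have hx1 : (1 : ℝ) ≤ x := root_ge_one k N hk hN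
  unfold qq
  rw [Nat.cast_max]
  refine max_le ?_ ?_
  · push_cast
    nlinarith
  · have hceil : (⌈x⌉₊ : ℝ) < x + 1 := Nat.ceil_lt_add_one (by linarith)
    push_cast
    nlinarith

lemma cells_card (k N : ℕ) (hk : 3 ≤ k) (hN : 1 ≤ N) :
    ((cells k N).card : ℝ) ≤ (Lam k : ℝ) * N := by
  have hnat : (cells k N).card ≤ k * (2 ^ k * qq k N) ^ (k - 1) := by
    unfold cells
    rw [Finset.card_sigma]
    have hone : ∀ i ∈ Finset.range k,
        (((Finset.range k).erase i).pi (fun j => Finset.Ico (0 : ℤ) (mm k N j))).card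
          ≤ (2 ^ k * qq k N) ^ (k - 1) := by
      intro i hi
      rw [Finset.card_pi]
      have hcard :
          ∏ j ∈ (Finset.range k).erase i, (Finset.Ico (0 : ℤ) ((mm k N j : ℤ))).card
            = ∏ j ∈ (Finset.range k).erase i, mm k N j := by
        refine Finset.prod_congr rfl (fun j _ => ?_)
        rw [Int.card_Ico, sub_zero, Int.toNat_natCast]
      rw [hcard]
      calc ∏ j ∈ (Finset.range k).erase i, mm k N j
          ≤ ∏ _j ∈ (Finset.range k).erase i, 2 ^ k * qq k N := by
            refine Finset.prod_le_prod' (fun j hj => ?_)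
            have hjk : j < k := Finset.mem_range.mp (Finset.mem_erase.mp hj).2
            refine le_trans (mm_ub k N j) ?_
            exact Nat.mul_le_mul_right _ (Nat.pow_le_pow_right (by norm_num) (by omega))
        _ = (2 ^ k * qq k N) ^ (k - 1) := by
            rw [Finset.prod_const, Finset.card_erase_of_mem hi, Finset.card_range]
    calc ∑ i ∈ Finset.range k,
        (((Finset.range k).erase i).pi (fun j => Finset.Ico (0 : ℤ) (mm k N j))).card
        ≤ ∑ _i ∈ Finset.range k, (2 ^ k * qq k N) ^ (k - 1) := Finset.sum_le_sum hone
      _ = k * (2 ^ k * qq k N) ^ (k - 1) := by rw [Finset.sum_const, Finset.card_range,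
            smul_eq_mul]
  have hreal : ((cells k N).card : ℝ) ≤ (k : ℝ) * ((2 : ℝ) ^ k * qq k N) ^ (k - 1) := by
    exact_mod_cast hnat
  refine le_trans hreal ?_
  set x : ℝ := (N : ℝ) ^ ((1 : ℝ) / ((k : ℝ) - 1)) with hxdef
  have hx1 : (1 : ℝ) ≤ x := root_ge_one k N hk hN
  have hq : (qq k N : ℝ) ≤ 2 * (k + 1) * x := qq_le k N hk hN
  have hb : ((2 : ℝ) ^ k * qq k N) ^ (k - 1) ≤ ((2 : ℝ) ^ k * (2 * (k + 1))) ^ (k - 1)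
      * x ^ (k - 1) := by
    rw [← mul_pow]
    refine pow_le_pow_left₀ (by positivity) ?_ _
    calc (2 : ℝ) ^ k * qq k N ≤ (2 : ℝ) ^ k * (2 * (k + 1) * x) := by
          refine mul_le_mul_of_nonneg_left hq (by positivity)
      _ = (2 : ℝ) ^ k * (2 * (k + 1)) * x := by ring
  have hxpow : x ^ (k - 1) = (N : ℝ) := rpow_root_pow k N hk
  have hbase1 : (1 : ℝ) ≤ (2 : ℝ) ^ k * (2 * (k + 1)) := by
    have h2 : (1 : ℝ) ≤ (2 : ℝ) ^ k := one_le_pow₀ (by norm_num)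
    nlinarith
  calc (k : ℝ) * ((2 : ℝ) ^ k * qq k N) ^ (k - 1)
      ≤ (k : ℝ) * (((2 : ℝ) ^ k * (2 * (k + 1))) ^ (k - 1) * (N : ℝ)) := by
        rw [← hxpow]
        exact mul_le_mul_of_nonneg_left hb (by positivity)
    _ ≤ (k : ℝ) * (((2 : ℝ) ^ k * (2 * (k + 1))) ^ k * (N : ℝ)) := by
        refine mul_le_mul_of_nonneg_left ?_ (by positivity)
        refine mul_le_mul_of_nonneg_right ?_ (by positivity)
        exact pow_le_pow_right₀ hbase1 (Nat.sub_le k 1)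
    _ = (Lam k : ℝ) * N := by
        unfold Lam
        push_cast
        ring

lemma Lam_ge_one (k : ℕ) (hk : 3 ≤ k) : (1 : ℝ) ≤ (Lam k : ℝ) := by
  have h : 1 ≤ Lam k := by
    unfold Lam
    have h1 : 0 < k := by omega
    have h2 : 0 < (2 ^ k * (2 * (k + 1))) ^ k := by positivity
    exact Nat.one_le_iff_ne_zero.mpr (Nat.mul_ne_zero h1.ne' h2.ne')
  exact_mod_cast h

end GHS

theorem grad_hull_small (k : ℕ) (hk : 3 ≤ k) :
    ∃ C : ℝ, 0 < C ∧ ∀ N : ℕ, 2 ≤ N →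
      ∃ S : Set ((Finset.Icc (1 : ℤ) (N : ℤ)) → ℝ), S.Finite ∧
        (∀ v ∈ S, ∀ a, |v a| ≤ C) ∧
        (S.ncard : ℝ) ≤ Real.exp (C * (N : ℝ) ^ (1 - 1 / ((k : ℝ) - 1))) ∧
        ∀ f : ℤ → ℝ, (∀ x, f x = 0 ∨ f x = 1) →
          (∀ x, x ∉ Finset.Icc (1 : ℤ) (N : ℤ) → f x = 0) →
          (fun a : (Finset.Icc (1 : ℤ) (N : ℤ)) => gradTkInt k N f a / N) ∈
            convexHull ℝ S := by
  classical
  refine ⟨4 * ((GHS.Lam k : ℝ) + k + 1), by positivity, ?_⟩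
  intro N hN
  set C : ℝ := 4 * ((GHS.Lam k : ℝ) + k + 1) with hC
  have hN1 : 1 ≤ N := le_trans (by norm_num) hN
  have hNR : (2 : ℝ) ≤ (N : ℝ) := by exact_mod_cast hN
  have hNpos : (0 : ℝ) < (N : ℝ) := by linarith
  have hk3 : (3 : ℝ) ≤ (k : ℝ) := by exact_mod_cast hk
  have hL1 : (1 : ℝ) ≤ (GHS.Lam k : ℝ) := GHS.Lam_ge_one k hk
  have hLamPos : (0 : ℝ) < (GHS.Lam k : ℝ) := by linarith
  set α : ℝ := 1 - 1 / ((k : ℝ) - 1) with hα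
  have hαhalf : (1 : ℝ) / 2 ≤ α := by
    rw [hα]
    have h2 : (1 : ℝ) / ((k : ℝ) - 1) ≤ 1 / 2 := by
      apply one_div_le_one_div_of_le
      · norm_num
      · linarith
    linarith
  have hα0 : (0 : ℝ) ≤ α := le_trans (by norm_num) hαhalf
  have hNα1 : (1 : ℝ) ≤ (N : ℝ) ^ α := by
    rw [show (1 : ℝ) = (N : ℝ) ^ (0 : ℝ) by rw [Real.rpow_zero]]
    exact Real.rpow_le_rpow_of_exponent_le (by linarith) hα0
  refine ⟨(GHS.SS k N : Set _), Finset.finite_toSet _, ?_, ?_, ?_⟩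
  · -- boundedness
    intro v hv a
    rw [Finset.mem_coe, GHS.SS, Finset.mem_insert] at hv
    rcases hv with h0 | himg
    · rw [h0]
      simp only [abs_zero]
      positivity
    · rw [Finset.mem_image] at himg
      obtain ⟨p, hp, hpv⟩ := himg
      rw [Finset.mem_sigma] at hp
      have hc := hp.1
      rw [GHS.cells, Finset.mem_sigma] at hc
      have hi : p.1.1 ∈ Finset.range k := hc.1
      rw [← hpv]
      unfold GHS.cat
      have hg0 : ∀ x : ℤ, (0 : ℝ) ≤ (if x ∈ p.2 then (1 : ℝ) else 0) := by
        intro x; split_ifs <;> norm_num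
      have hg1 : ∀ x : ℤ, (if x ∈ p.2 then (1 : ℝ) else 0) ≤ 1 := by
        intro x; split_ifs <;> norm_num
      have hU0 := GHS.U_nonneg k N p.1.1 p.1.2 _ hg0 (a : ℤ)
      have hU3 := GHS.U_le_three k N p.1.1 hk hi p.1.2 _ hg0 hg1 (a : ℤ)
      rw [abs_of_nonneg (mul_nonneg hLamPos.le hU0)]
      have : (GHS.Lam k : ℝ) * GHS.U k N p.1.1 p.1.2
          (fun x => if x ∈ p.2 then (1 : ℝ) else 0) (a : ℤ) ≤ (GHS.Lam k : ℝ) * 3 :=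
        mul_le_mul_of_nonneg_left hU3 hLamPos.le
      rw [hC]
      nlinarith [Nat.cast_nonneg (α := ℝ) k]
  · -- cardinality
    rw [Set.ncard_coe_finset]
    set E : ℕ := k * (N / GHS.qq k N + 1) with hE
    have hcard : (GHS.SS k N).card ≤ 1 + (GHS.cells k N).card * 2 ^ E := by
      unfold GHS.SS
      refine le_trans (Finset.card_insert_le _ _) ?_
      have h1 : (((GHS.cells k N).sigma (fun c => (GHS.Tr k N c.1 c.2).powerset)).image
          (fun p => GHS.cat k N p.1 p.2)).card
          ≤ ((GHS.cells k N).sigma (fun c => (GHS.Tr k N c.1 c.2).powerset)).card :=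
        Finset.card_image_le
      have h2 : ((GHS.cells k N).sigma (fun c => (GHS.Tr k N c.1 c.2).powerset)).card
          ≤ (GHS.cells k N).card * 2 ^ E := by
        rw [Finset.card_sigma]
        have h3 : ∀ c ∈ GHS.cells k N, ((GHS.Tr k N c.1 c.2).powerset).card ≤ 2 ^ E := by
          intro c _
          rw [Finset.card_powerset]
          refine Nat.pow_le_pow_right (by norm_num) ?_
          rw [hE]
          exact GHS.Tr_card k N c.1 hN1 c.2
        refine le_trans (Finset.sum_le_sum h3) ?_
        rw [Finset.sum_const, smul_eq_mul]
      omega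
    have hQ : (N : ℝ) / (GHS.qq k N : ℝ) ≤ (N : ℝ) ^ α := by
      have hqge : (N : ℝ) ^ ((1 : ℝ) / ((k : ℝ) - 1)) ≤ (GHS.qq k N : ℝ) :=
        GHS.qq_rpow_le k N
      have hxpos : (0 : ℝ) < (N : ℝ) ^ ((1 : ℝ) / ((k : ℝ) - 1)) := by positivity
      calc (N : ℝ) / (GHS.qq k N : ℝ)
          ≤ (N : ℝ) / ((N : ℝ) ^ ((1 : ℝ) / ((k : ℝ) - 1))) :=
            div_le_div_of_nonneg_left hNpos.le hxpos hqge
        _ = (N : ℝ) ^ α := by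
            rw [hα, Real.rpow_sub hNpos, Real.rpow_one]
    have hER : (E : ℝ) ≤ (k : ℝ) * (N : ℝ) ^ α + k := by
      rw [hE]
      push_cast
      have hd : ((N / GHS.qq k N : ℕ) : ℝ) ≤ (N : ℝ) / (GHS.qq k N : ℝ) := Nat.cast_div_le
      have hd2 : ((N / GHS.qq k N : ℕ) : ℝ) ≤ (N : ℝ) ^ α := le_trans hd hQ
      nlinarith [Nat.cast_nonneg (α := ℝ) k]
    have hlog2 : Real.log 2 ≤ 1 := by
      have := Real.log_le_sub_one_of_pos (by norm_num : (0 : ℝ) < 2)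
      linarith
    have hlogN : Real.log (N : ℝ) ≤ 2 * (N : ℝ) ^ α := by
      have h12 : Real.log ((N : ℝ) ^ ((1 : ℝ) / 2)) ≤ (N : ℝ) ^ ((1 : ℝ) / 2) - 1 :=
        Real.log_le_sub_one_of_pos (by positivity)
      have hsq : (N : ℝ) ^ ((1 : ℝ) / 2) ≤ (N : ℝ) ^ α :=
        Real.rpow_le_rpow_of_exponent_le (by linarith) hαhalf
      have hlr : Real.log ((N : ℝ) ^ ((1 : ℝ) / 2)) = (1 / 2) * Real.log (N : ℝ) :=
        Real.log_rpow hNpos _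
      rw [hlr] at h12
      linarith
    have hcellsR : ((GHS.cells k N).card : ℝ) ≤ (GHS.Lam k : ℝ) * N :=
      GHS.cells_card k N hk hN1
    have h2E1 : (1 : ℝ) ≤ (2 : ℝ) ^ E := one_le_pow₀ (by norm_num)
    set P : ℝ := (GHS.Lam k : ℝ) * N * 2 ^ E with hP
    have hPpos : (0 : ℝ) < P := by positivity
    have hSP : ((GHS.SS k N).card : ℝ) ≤ 1 + P := by
      have hc1 : ((GHS.SS k N).card : ℝ) ≤ 1 + ((GHS.cells k N).card : ℝ) * 2 ^ E := by
        exact_mod_cast hcard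
      refine le_trans hc1 ?_
      rw [hP]
      nlinarith
    have hP1 : (1 : ℝ) ≤ P := by
      rw [hP]
      nlinarith
    have hlogP : Real.log (2 * P) ≤ C * (N : ℝ) ^ α := by
      rw [Real.log_mul (by norm_num) hPpos.ne', hP,
        Real.log_mul (by positivity) (by positivity),
        Real.log_mul hLamPos.ne' hNpos.ne', Real.log_pow]
      have hlogLam : Real.log (GHS.Lam k : ℝ) ≤ (GHS.Lam k : ℝ) := by
        have := Real.log_le_sub_one_of_pos hLamPos
        linarith
      have hElog : (E : ℝ) * Real.log 2 ≤ (k : ℝ) * (N : ℝ) ^ α + k := by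
        have hE0 : (0 : ℝ) ≤ (E : ℝ) := Nat.cast_nonneg _
        calc (E : ℝ) * Real.log 2 ≤ (E : ℝ) * 1 := by
              refine mul_le_mul_of_nonneg_left hlog2 hE0
          _ = (E : ℝ) := by ring
          _ ≤ (k : ℝ) * (N : ℝ) ^ α + k := hER
      rw [hC]
      have hX0 : (0 : ℝ) ≤ (N : ℝ) ^ α := by positivity
      have hLamX : (GHS.Lam k : ℝ) ≤ (GHS.Lam k : ℝ) * (N : ℝ) ^ α :=
        le_mul_of_one_le_right hLamPos.le hNα1
      have hkX : (k : ℝ) ≤ (k : ℝ) * (N : ℝ) ^ α :=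
        le_mul_of_one_le_right (Nat.cast_nonneg k) hNα1
      have hLamX0 : (0 : ℝ) ≤ (GHS.Lam k : ℝ) * (N : ℝ) ^ α := by positivity
      have hkX0 : (0 : ℝ) ≤ (k : ℝ) * (N : ℝ) ^ α := by positivity
      linarith [hlogLam, hElog, hlogN, hlog2, hLamX, hkX, hLamX0, hkX0, hNα1]
    calc ((GHS.SS k N).card : ℝ) ≤ 1 + P := hSP
      _ ≤ 2 * P := by linarith
      _ = Real.exp (Real.log (2 * P)) := (Real.exp_log (by linarith)).symm
      _ ≤ Real.exp (C * (N : ℝ) ^ α) := Real.exp_le_exp.mpr hlogP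
  · -- membership in the convex hull
    intro f hf01 hsupp
    set L : ℝ := (GHS.Lam k : ℝ) * N with hLdef
    have hLpos : (0 : ℝ) < L := by rw [hLdef]; positivity
    set Af : (Σ i : ℕ, ∀ j ∈ (Finset.range k).erase i, ℤ) → Finset ℤ :=
      fun c => (GHS.Tr k N c.1 c.2).filter (fun y => f y = 1) with hAf
    set t : Finset (Option (Σ i : ℕ, ∀ j ∈ (Finset.range k).erase i, ℤ)) :=
      insert none ((GHS.cells k N).image some) with ht
    set w : Option (Σ i : ℕ, ∀ j ∈ (Finset.range k).erase i, ℤ) → ℝ :=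
      fun o => o.elim (1 - (GHS.cells k N).card / L) (fun _ => 1 / L) with hw
    set z : Option (Σ i : ℕ, ∀ j ∈ (Finset.range k).erase i, ℤ) →
        ((Finset.Icc (1 : ℤ) (N : ℤ)) → ℝ) :=
      fun o => o.elim (fun _ => 0) (fun c => GHS.cat k N c (Af c)) with hz
    have hnone : (none : Option (Σ i : ℕ, ∀ j ∈ (Finset.range k).erase i, ℤ))
        ∉ (GHS.cells k N).image some := by simp
    have hsome_inj : ∀ x ∈ GHS.cells k N, ∀ y ∈ GHS.cells k N,
        (some x : Option _) = some y → x = y := fun x _ y _ h => Option.some_injective _ h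
    have hcells_le : ((GHS.cells k N).card : ℝ) ≤ L := by
      rw [hLdef]; exact GHS.cells_card k N hk hN1
    have hw0 : ∀ o ∈ t, 0 ≤ w o := by
      intro o _
      rcases o with _ | c
      · simp only [hw, Option.elim]
        rw [sub_nonneg, div_le_one hLpos]
        exact hcells_le
      · simp only [hw, Option.elim]
        positivity
    have hsum : ∑ o ∈ t, w o = 1 := by
      rw [ht, Finset.sum_insert hnone, Finset.sum_image hsome_inj]
      simp only [hw, Option.elim]
      rw [Finset.sum_const, nsmul_eq_mul]
      field_simp
      ring
    have hz_mem : ∀ o ∈ t, z o ∈ (GHS.SS k N : Set _) := by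
      intro o ho
      rw [Finset.mem_coe]
      rcases o with _ | c
      · simp only [hz, Option.elim]
        unfold GHS.SS
        exact Finset.mem_insert_self _ _
      · simp only [hz, Option.elim]
        rw [ht, Finset.mem_insert] at ho
        rcases ho with h' | h'
        · exact absurd h' (by simp)
        · rw [Finset.mem_image] at h'
          obtain ⟨c', hc', hcc⟩ := h'
          have hcc' : c' = c := Option.some_injective _ hcc
          rw [hcc'] at hc'
          unfold GHS.SS
          refine Finset.mem_insert_of_mem ?_
          rw [Finset.mem_image]
          refine ⟨⟨c, Af c⟩, ?_, rfl⟩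
          rw [Finset.mem_sigma]
          exact ⟨hc', Finset.mem_powerset.mpr (Finset.filter_subset _ _)⟩
    have hterm : ∀ a : (Finset.Icc (1 : ℤ) (N : ℤ)), ∀ c ∈ GHS.cells k N,
        (w (some c) • z (some c)) a = (1 / (N : ℝ)) * GHS.U k N c.1 c.2 f (a : ℤ) := by
      intro a c _
      simp only [hw, hz, Option.elim, Pi.smul_apply, smul_eq_mul]
      unfold GHS.cat
      rw [← GHS.traceEq k N c.1 c.2 f hf01 hsupp (a : ℤ)]
      rw [hLdef]
      have hNne : (N : ℝ) ≠ 0 := hNpos.ne'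
      have hLamne : (GHS.Lam k : ℝ) ≠ 0 := hLamPos.ne'
      field_simp
    have key : (fun a : (Finset.Icc (1 : ℤ) (N : ℤ)) => gradTkInt k N f a / N)
        = t.centerMass w z := by
      rw [Finset.centerMass_eq_of_sum_1 _ _ hsum]
      rw [ht, Finset.sum_insert hnone, Finset.sum_image hsome_inj]
      funext a
      show gradTkInt k N f (a : ℤ) / (N : ℝ)
          = (w none • z none + ∑ c ∈ GHS.cells k N, w (some c) • z (some c)) a
      rw [Pi.add_apply, Finset.sum_apply]
      have hz0 : (w none • z none) a = 0 := by
        simp only [hw, hz, Option.elim, Pi.smul_apply, smul_eq_mul]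
        simp
      rw [hz0, zero_add, Finset.sum_congr rfl (hterm a), ← Finset.mul_sum,
        GHS.grad_sum k N f (a : ℤ)]
      ring
    rw [key]
    refine Finset.centerMass_mem_convexHull t hw0 ?_ hz_mem
    rw [hsum]
    norm_num

end
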